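/- Let m ∈ ℕ with m ≥ 1, let f : [0,1] → [0,∞) be integrable with ∫₀¹ f(x) dx = 1, and suppose 0 = x₀ < x₁ < ⋯ < x_m = 1 are strictly increasing m-quantiles of f, i.e., ∫_{x_{j−1}}^{x_j} f(x) dx = 1/m for every j ∈ {1,…,m}. Define the evened-out density f̃(x) := (1/m) Σ_{j=1}^{m} 𝟙_{[x_{j−1},x_j]}(x) / (x_j − x_{j−1}) and the valuation ṽ(a,b) := ∫_a^b f̃(x) dx. Then for all 0 ≤ a ≤ b ≤ 1: (i) ṽ(a,b) ≥ (b − a)/m (ṽ is (1/m)-strongly-hungry), and (ii) |ṽ(a,b) − ∫_a^b f(x) dx| ≤ 2/m (ṽ is a 2/m-approximation of the valuation v(a,b) = ∫_a^b f). -/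

import Mathlib

open Set MeasureTheory

private lemma indIcc_intervalIntegrable' (c d k a b : ℝ) :
    IntervalIntegrable ((Icc c d).indicator fun _ => k) volume a b := by
  refine MeasureTheory.Integrable.intervalIntegrable ?_
  rw [MeasureTheory.integrable_indicator_iff measurableSet_Icc]
  exact integrableOn_const measure_Icc_lt_top.ne

private lemma g_intervalIntegrable (m : ℕ) (xs : ℕ → ℝ) (a b : ℝ) :
    IntervalIntegrable (fun t => (1 / (m : ℝ)) * ∑ j ∈ Finset.range m,
        Set.indicator (Icc (xs j) (xs (j + 1))) (fun _ => 1 / (xs (j + 1) - xs j)) t)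
      volume a b := by
  have := (IntervalIntegrable.sum (μ := volume) (a := a) (b := b) (Finset.range m)
    (f := fun j => (Icc (xs j) (xs (j+1))).indicator fun _ => 1 / (xs (j + 1) - xs j))
    (fun j _ => indIcc_intervalIntegrable' _ _ _ a b)).const_mul (1 / (m:ℝ))
  simpa [Finset.sum_apply] using this

private lemma Tval_aux (a b c d k : ℝ) (hab : a ≤ b) :
    ∫ t in a..b, (Icc c d).indicator (fun _ => k) t
      = k * max (min b d - max a c) 0 := by
  have hae : (Icc c d).indicator (fun _ => k) =ᵐ[volume] (Ioc c d).indicator (fun _ => k) :=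
    indicator_ae_eq_of_ae_eq_set (MeasureTheory.Ioc_ae_eq_Icc).symm
  rw [intervalIntegral.integral_of_le hab,
    MeasureTheory.integral_congr_ae (MeasureTheory.ae_restrict_of_ae hae),
    MeasureTheory.setIntegral_indicator measurableSet_Ioc, Set.Ioc_inter_Ioc,
    MeasureTheory.setIntegral_const, Real.volume_real_Ioc, smul_eq_mul,
    mul_comm]

private lemma Tval (m : ℕ) (xs : ℕ → ℝ) (a b : ℝ) (hab : a ≤ b) :
    ∫ t in a..b, (1 / (m : ℝ)) * ∑ j ∈ Finset.range m,
        Set.indicator (Icc (xs j) (xs (j + 1))) (fun _ => 1 / (xs (j + 1) - xs j)) t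
      = (1 / (m : ℝ)) * ∑ j ∈ Finset.range m,
          (1 / (xs (j + 1) - xs j)) * max (min b (xs (j + 1)) - max a (xs j)) 0 := by
  rw [intervalIntegral.integral_const_mul,
    intervalIntegral.integral_finset_sum
      (fun j _ => indIcc_intervalIntegrable' (xs j) (xs (j+1)) (1 / (xs (j+1) - xs j)) a b)]
  congr 1
  exact Finset.sum_congr rfl fun j _ => Tval_aux a b _ _ _ hab

private lemma xs_mono (m : ℕ) (xs : ℕ → ℝ) (hmono : ∀ j < m, xs j < xs (j + 1)) :
    ∀ i j, i ≤ j → j ≤ m → xs i ≤ xs j := by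
  intro i j hij hjm
  induction j with
  | zero => simp [Nat.le_zero.mp hij]
  | succ n ih =>
    rcases Nat.lt_or_ge i (n + 1) with h | h
    · exact le_trans (ih (Nat.lt_succ_iff.mp h) (by omega)) (le_of_lt (hmono n (by omega)))
    · have : i = n + 1 := le_antisymm hij h
      simp [this]

private lemma exists_quantile_index (m : ℕ) (xs : ℕ → ℝ) (hm : 1 ≤ m)
    (x : ℝ) (h0 : xs 0 ≤ x) (h1 : x ≤ xs m) :
    ∃ k, k < m ∧ xs k ≤ x ∧ x ≤ xs (k + 1) := by
  induction m with
  | zero => omega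
  | succ n ih =>
    rcases Nat.eq_zero_or_pos n with rfl | hn
    · exact ⟨0, by omega, h0, h1⟩
    · rcases le_total (xs n) x with h | h
      · exact ⟨n, by omega, h, h1⟩
      · obtain ⟨k, hk, hk1, hk2⟩ := ih hn h
        exact ⟨k, by omega, hk1, hk2⟩
private lemma clamp_step (a b u v : ℝ) (hab : a ≤ b) (huv : u ≤ v) :
    max a (min b v) - max a (min b u) ≤ max (min b v - max a u) 0 := by
  simp only [min_def, max_def]
  split_ifs <;> linarith

theorem evenedOut_density_props (m : ℕ) (hm : 1 ≤ m) (f : ℝ → ℝ)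
    (hf_int : IntervalIntegrable f volume 0 1)
    (hf_nonneg : ∀ t ∈ Icc (0:ℝ) 1, 0 ≤ f t)
    (hf_total : ∫ t in (0:ℝ)..1, f t = 1)
    (xs : ℕ → ℝ) (hx0 : xs 0 = 0) (hxm : xs m = 1)
    (hmono : ∀ j < m, xs j < xs (j + 1))
    (hquant : ∀ j < m, ∫ t in (xs j)..(xs (j + 1)), f t = 1 / (m : ℝ)) :
    ∀ a b : ℝ, 0 ≤ a → a ≤ b → b ≤ 1 →
      ((b - a) / (m : ℝ) ≤
        ∫ t in a..b, (1 / (m : ℝ)) * ∑ j ∈ Finset.range m,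
          Set.indicator (Icc (xs j) (xs (j + 1)))
            (fun _ => 1 / (xs (j + 1) - xs j)) t) ∧
      |(∫ t in a..b, (1 / (m : ℝ)) * ∑ j ∈ Finset.range m,
          Set.indicator (Icc (xs j) (xs (j + 1)))
            (fun _ => 1 / (xs (j + 1) - xs j)) t)
        - ∫ t in a..b, f t| ≤ 2 / (m : ℝ) := by
  intro a b ha hab hb1
  have hm0 : (0:ℝ) < m := by exact_mod_cast hm
  have hmono' := xs_mono m xs hmono
  have hx01 : ∀ j, j ≤ m → 0 ≤ xs j ∧ xs j ≤ 1 := fun j hj =>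
    ⟨hx0 ▸ hmono' 0 j (Nat.zero_le _) hj, hxm ▸ hmono' j m hj le_rfl⟩
  have hlenpos : ∀ j, j < m → 0 < xs (j + 1) - xs j := fun j hj => sub_pos.2 (hmono j hj)
  have hlen1 : ∀ j, j < m → xs (j + 1) - xs j ≤ 1 := by
    intro j hj
    have h1 := (hx01 j (le_of_lt hj)).1
    have h2 := (hx01 (j + 1) (by omega)).2
    linarith
  have hb0 : (0:ℝ) ≤ b := le_trans ha hab
  -- integrability of f on subintervals of [0,1]
  have hfint_sub : ∀ c d : ℝ, 0 ≤ c → c ≤ d → d ≤ 1 → IntervalIntegrable f volume c d := by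
    intro c d hc hcd hd
    apply hf_int.mono_set
    rw [Set.uIcc_of_le hcd, Set.uIcc_of_le (zero_le_one)]
    exact Set.Icc_subset_Icc hc hd
  -- values of F at quantile points
  have hF : ∀ k, k ≤ m → ∫ t in (0:ℝ)..(xs k), f t = (k : ℝ) / m := by
    intro k hkm
    have hsum : ∑ j ∈ Finset.range k, ∫ t in (xs j)..(xs (j + 1)), f t
        = ∫ t in (xs 0)..(xs k), f t := by
      refine intervalIntegral.sum_integral_adjacent_intervals fun j hj => ?_
      exact hfint_sub _ _ (hx01 j (by omega)).1 (le_of_lt (hmono j (by omega)))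
        (hx01 (j + 1) (by omega)).2
    rw [hx0] at hsum
    rw [← hsum, Finset.sum_congr rfl fun j hj => hquant j (by
      have := Finset.mem_range.mp hj; omega), Finset.sum_const, Finset.card_range,
      nsmul_eq_mul]
    ring
  -- monotonicity of F
  have hFmono : ∀ c d : ℝ, 0 ≤ c → c ≤ d → d ≤ 1 →
      (∫ t in (0:ℝ)..c, f t) ≤ ∫ t in (0:ℝ)..d, f t := by
    intro c d hc hcd hd
    have hadd := intervalIntegral.integral_add_adjacent_intervals
      (hfint_sub 0 c le_rfl hc (le_trans hcd hd)) (hfint_sub c d hc hcd hd)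
    have hnn : 0 ≤ ∫ t in c..d, f t :=
      intervalIntegral.integral_nonneg hcd fun u hu =>
        hf_nonneg u ⟨le_trans hc hu.1, le_trans hu.2 hd⟩
    linarith
  -- values of S at quantile points
  have hSval : ∀ k, k ≤ m → ∑ j ∈ Finset.range m,
      (1 / (xs (j + 1) - xs j)) * max (min (xs k) (xs (j + 1)) - max 0 (xs j)) 0 = (k : ℝ) := by
    intro k hkm
    have hterm : ∀ j ∈ Finset.range m,
        (1 / (xs (j + 1) - xs j)) * max (min (xs k) (xs (j + 1)) - max 0 (xs j)) 0
          = if j < k then (1:ℝ) else 0 := by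
      intro j hj
      have hjm := Finset.mem_range.mp hj
      rw [max_eq_right (hx01 j (by omega)).1]
      by_cases h : j < k
      · rw [if_pos h, min_eq_right (hmono' (j + 1) k (by omega) hkm),
          max_eq_left (le_of_lt (hlenpos j hjm)), one_div,
          inv_mul_cancel₀ (ne_of_gt (hlenpos j hjm))]
      · rw [if_neg h, min_eq_left (hmono' k (j + 1) (by omega) (by omega)),
          max_eq_right (by
            have := hmono' k j (by omega) (by omega); linarith), mul_zero]
    rw [Finset.sum_congr rfl hterm]
    have hfilt : Finset.filter (fun j => j < k) (Finset.range m) = Finset.range k := by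
      ext j; simp only [Finset.mem_filter, Finset.mem_range]; omega
    rw [Finset.sum_ite, Finset.sum_const, Finset.sum_const, hfilt, Finset.card_range,
      nsmul_eq_mul, nsmul_eq_mul, mul_one, mul_zero, add_zero]
  -- monotonicity of S in second argument
  have hSmono : ∀ c d d' : ℝ, d ≤ d' → ∑ j ∈ Finset.range m,
      (1 / (xs (j + 1) - xs j)) * max (min d (xs (j + 1)) - max c (xs j)) 0
      ≤ ∑ j ∈ Finset.range m,
      (1 / (xs (j + 1) - xs j)) * max (min d' (xs (j + 1)) - max c (xs j)) 0 := by
    intro c d d' hdd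
    refine Finset.sum_le_sum fun j hj => ?_
    have hL := hlenpos j (Finset.mem_range.mp hj)
    refine mul_le_mul_of_nonneg_left ?_ (le_of_lt (one_div_pos.mpr hL))
    exact max_le_max (sub_le_sub_right (min_le_min_right _ hdd) _) le_rfl
  constructor
  · -- part (i)
    rw [Tval m xs a b hab]
    have tele : ∑ j ∈ Finset.range m,
        (max a (min b (xs (j + 1))) - max a (min b (xs j))) = b - a := by
      rw [Finset.sum_range_sub (fun j => max a (min b (xs j))), hx0, hxm,
        min_eq_left hb1, max_eq_right hab, min_eq_right hb0, max_eq_left ha]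
    have key : b - a ≤ ∑ j ∈ Finset.range m,
        (1 / (xs (j + 1) - xs j)) * max (min b (xs (j + 1)) - max a (xs j)) 0 := by
      rw [← tele]
      refine Finset.sum_le_sum fun j hj => ?_
      have hjm := Finset.mem_range.mp hj
      have h1 := clamp_step a b (xs j) (xs (j + 1)) hab (le_of_lt (hmono j hjm))
      have h2 : max (min b (xs (j + 1)) - max a (xs j)) 0
          ≤ (1 / (xs (j + 1) - xs j)) * max (min b (xs (j + 1)) - max a (xs j)) 0 := by
        have hL := hlenpos j hjm
        have hone : 1 ≤ 1 / (xs (j + 1) - xs j) := by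
          rw [le_div_iff₀ hL]; have := hlen1 j hjm; linarith
        calc max (min b (xs (j + 1)) - max a (xs j)) 0
            = 1 * max (min b (xs (j + 1)) - max a (xs j)) 0 := (one_mul _).symm
          _ ≤ _ := mul_le_mul_of_nonneg_right hone (le_max_right _ 0)
      linarith
    calc (b - a) / (m:ℝ) = (1 / m) * (b - a) := by ring
      _ ≤ _ := mul_le_mul_of_nonneg_left key (by positivity)
  · -- part (ii)
    have keypt : ∀ x : ℝ, 0 ≤ x → x ≤ 1 →
        |(∫ t in (0:ℝ)..x, (1 / (m : ℝ)) * ∑ j ∈ Finset.range m,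
          Set.indicator (Icc (xs j) (xs (j + 1)))
            (fun _ => 1 / (xs (j + 1) - xs j)) t) - ∫ t in (0:ℝ)..x, f t| ≤ 1 / m := by
      intro x hx0' hx1'
      obtain ⟨k, hk, hk1, hk2⟩ := exists_quantile_index m xs hm x (by rw [hx0]; exact hx0')
        (by rw [hxm]; exact hx1')
      have hxk0 : 0 ≤ xs k := (hx01 k (by omega)).1
      have hxk1 : xs (k + 1) ≤ 1 := (hx01 (k + 1) (by omega)).2
      -- bounds for F
      have hFlo : ((k:ℝ) / m) ≤ ∫ t in (0:ℝ)..x, f t := by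
        rw [← hF k (by omega)]
        exact hFmono (xs k) x hxk0 hk1 hx1'
      have hFhi : (∫ t in (0:ℝ)..x, f t) ≤ ((k:ℝ) + 1) / m := by
        have := hF (k + 1) (by omega)
        push_cast at this
        rw [← this]
        exact hFmono x (xs (k + 1)) hx0' hk2 hxk1
      -- bounds for G
      have hG := Tval m xs 0 x hx0'
      have hGlo : ((k:ℝ) / m) ≤ ∫ t in (0:ℝ)..x, (1 / (m : ℝ)) * ∑ j ∈ Finset.range m,
          Set.indicator (Icc (xs j) (xs (j + 1)))
            (fun _ => 1 / (xs (j + 1) - xs j)) t := by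
        rw [hG]
        have h1 := hSmono 0 (xs k) x hk1
        rw [hSval k (by omega)] at h1
        calc ((k:ℝ) / m) = (1 / m) * k := by ring
          _ ≤ _ := mul_le_mul_of_nonneg_left h1 (by positivity)
      have hGhi : (∫ t in (0:ℝ)..x, (1 / (m : ℝ)) * ∑ j ∈ Finset.range m,
          Set.indicator (Icc (xs j) (xs (j + 1)))
            (fun _ => 1 / (xs (j + 1) - xs j)) t) ≤ ((k:ℝ) + 1) / m := by
        rw [hG]
        have h1 := hSmono 0 x (xs (k + 1)) hk2
        rw [hSval (k + 1) (by omega)] at h1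
        push_cast at h1
        calc (1 / (m:ℝ)) * ∑ j ∈ Finset.range m,
            (1 / (xs (j + 1) - xs j)) * max (min x (xs (j + 1)) - max 0 (xs j)) 0
            ≤ (1 / m) * ((k:ℝ) + 1) := mul_le_mul_of_nonneg_left h1 (by positivity)
          _ = ((k:ℝ) + 1) / m := by ring
      rw [abs_le]
      constructor <;> [skip; skip] <;>
        · have h1m : ((k:ℝ) + 1) / m - (k:ℝ) / m = 1 / m := by field_simp; ring
          linarith
    -- split a..b through 0
    have haddf := intervalIntegral.integral_add_adjacent_intervals
      (hfint_sub 0 a le_rfl ha (le_trans hab hb1)) (hfint_sub a b ha hab hb1)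
    have haddg := intervalIntegral.integral_add_adjacent_intervals
      (g_intervalIntegrable m xs 0 a) (g_intervalIntegrable m xs a b)
    have h1 := keypt a ha (le_trans hab hb1)
    have h2 := keypt b hb0 hb1
    rw [abs_le] at h1 h2
    rw [abs_le]
    have h2m : (2:ℝ) / m = 1 / m + 1 / m := by ring
    constructor
    · linarith [h1.2, h2.1]
    · linarith [h1.1, h2.2]
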